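/- Let w = w(x₁,…,x_n) be a multilinear commutator word, I ⊆ {1,…,n}, and M a normal subgroup of a group K. Assume w_J(K; M) = 1 for every proper subset J ⊊ I (i.e., every w-value whose arguments lie in K at positions in J and in M elsewhere is trivial). Then for any elements kᵢ ∈ K (i ∈ I) and mⱼ ∈ M (j ∈ {1,…,n}), one has w_I(kᵢmᵢ; m_l) = w_I(kᵢ; m_l), i.e., the value of w with arguments kᵢmᵢ at positions i ∈ I and m_l at positions l ∉ I equals the value with arguments kᵢ at positions in I and m_l elsewhere. -/

import Mathlib

/-- Multilinear commutator words (outer commutator words) on `n` (pairwise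
distinct) variables: the single variable is one, and the commutator of two
multilinear commutator words in disjoint variables is one. -/
inductive MlWord : ℕ → Type
  | var : MlWord 1
  | comm : ∀ {a b : ℕ}, MlWord a → MlWord b → MlWord (a + b)

open scoped commutatorElement

/-- Evaluation of a multilinear commutator word at a tuple of group elements. -/
def MlWord.eval {G : Type*} [Group G] : ∀ {n : ℕ}, MlWord n → (Fin n → G) → G
  | _, .var, g => g 0
  | _, .comm u v, g =>
      ⁅u.eval fun i => g (Fin.castAdd _ i), v.eval fun i => g (Fin.natAdd _ i)⁆

universe u

theorem MlWord.eval_map {G H : Type*} [Group G] [Group H] (f : G →* H) :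
    ∀ {n : ℕ} (w : MlWord n) (c : Fin n → G), f (w.eval c) = w.eval (fun i => f (c i))
  | _, .var, c => rfl
  | _, .comm u v, c => by
    simp only [MlWord.eval, map_commutatorElement, eval_map f u, eval_map f v]

theorem MlWord.eval_conj {G : Type*} [Group G] {n : ℕ} (w : MlWord n) (c : Fin n → G) (x : G) :
    x * w.eval c * x⁻¹ = w.eval (fun i => x * c i * x⁻¹) := by
  have := MlWord.eval_map (MulAut.conj x).toMonoidHom w c
  simpa [MulAut.conj_apply] using this

theorem MlWord.eval_append {G : Type*} [Group G] {a b : ℕ} (u : MlWord a) (v : MlWord b)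
    (c₁ : Fin a → G) (c₂ : Fin b → G) :
    (MlWord.comm u v).eval (Fin.append c₁ c₂) = ⁅u.eval c₁, v.eval c₂⁆ := by
  simp only [MlWord.eval, Fin.append_left, Fin.append_right]

theorem ml_comm_left {G : Type*} [Group G] {z q : G} (h : Commute z q) (p : G) :
    ⁅p * z, q⁆ = ⁅p, q⁆ := by
  calc ⁅p * z, q⁆ = p * (z * q) * z⁻¹ * p⁻¹ * q⁻¹ := by
        rw [commutatorElement_def]; group
    _ = p * (q * z) * z⁻¹ * p⁻¹ * q⁻¹ := by rw [h.eq]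
    _ = ⁅p, q⁆ := by rw [commutatorElement_def]; group

theorem ml_comm_right {G : Type*} [Group G] {z p : G} (h : Commute z p) (q : G) :
    ⁅p, q * z⁆ = ⁅p, q⁆ := by
  have h2 : z * p⁻¹ = p⁻¹ * z := (h.inv_right).eq
  calc ⁅p, q * z⁆ = p * q * (z * p⁻¹) * z⁻¹ * q⁻¹ := by
        rw [commutatorElement_def]; group
    _ = p * q * (p⁻¹ * z) * z⁻¹ * q⁻¹ := by rw [h2]
    _ = ⁅p, q⁆ := by rw [commutatorElement_def]; group

/-- The statement of the main theorem, as a predicate on words. -/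
def MlStmt {n : ℕ} (w : MlWord n) : Prop :=
  ∀ (K : Type u) [Group K], ∀ (I : Finset (Fin n)) (M : Subgroup K), M.Normal →
    (∀ J : Finset (Fin n), J ⊂ I →
      ∀ c : Fin n → K, (∀ i ∉ J, c i ∈ M) → w.eval c = 1) →
    ∀ k m : Fin n → K, (∀ j, m j ∈ M) →
    w.eval (fun i => if i ∈ I then k i * m i else m i) =
      w.eval (fun i => if i ∈ I then k i else m i)

/-- Key quotient step: if all "deficient" values of `w` lie in a normal subgroup `C`,
then the two evaluations differ by an element of `C`. -/
theorem ml_key {n : ℕ} (w : MlWord n) {K : Type u} [Group K] (I : Finset (Fin n))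
    (M : Subgroup K) (hMn : M.Normal) (C : Subgroup K) (hCn : C.Normal)
    (hval : ∀ J : Finset (Fin n), J ⊂ I →
      ∀ c : Fin n → K, (∀ i ∉ J, c i ∈ M) → w.eval c ∈ C)
    (ih : MlStmt.{u} w)
    (k m : Fin n → K) (hm : ∀ j, m j ∈ M) :
    ∃ z ∈ C, w.eval (fun i => if i ∈ I then k i * m i else m i)
      = w.eval (fun i => if i ∈ I then k i else m i) * z := by
  haveI := hCn
  set π := QuotientGroup.mk' C with hπ
  have hMn' : (Subgroup.map π M).Normal := hMn.map π (QuotientGroup.mk'_surjective C)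
  have hJ' : ∀ J : Finset (Fin n), J ⊂ I →
      ∀ c : Fin n → K ⧸ C, (∀ i ∉ J, c i ∈ Subgroup.map π M) → w.eval c = 1 := by
    intro J hJI c hc
    have hex : ∀ i, ∃ x : K, π x = c i ∧ (i ∉ J → x ∈ M) := by
      intro i
      by_cases hi : i ∈ J
      · obtain ⟨x, hx⟩ := QuotientGroup.mk'_surjective C (c i)
        exact ⟨x, hx, fun h => absurd hi h⟩
      · obtain ⟨x, hxM, hx⟩ := Subgroup.mem_map.mp (hc i hi)
        exact ⟨x, hx, fun _ => hxM⟩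
    choose d hd hdM using hex
    have hcd : c = fun i => π (d i) := funext fun i => (hd i).symm
    rw [hcd, ← MlWord.eval_map]
    exact (QuotientGroup.eq_one_iff _).mpr (hval J hJI d hdM)
  have hq := ih (K ⧸ C) I (Subgroup.map π M) hMn' hJ'
    (fun i => π (k i)) (fun i => π (m i)) (fun j => Subgroup.mem_map_of_mem π (hm j))
  have e1 : (fun i => if i ∈ I then π (k i) * π (m i) else π (m i))
      = fun i => π (if i ∈ I then k i * m i else m i) := by
    funext i; by_cases hi : i ∈ I <;> simp [hi]
  have e2 : (fun i => if i ∈ I then π (k i) else π (m i))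
      = fun i => π (if i ∈ I then k i else m i) := by
    funext i; by_cases hi : i ∈ I <;> simp [hi]
  rw [e1, e2, ← MlWord.eval_map, ← MlWord.eval_map] at hq
  set A' := w.eval (fun i => if i ∈ I then k i * m i else m i) with hA'
  set A := w.eval (fun i => if i ∈ I then k i else m i) with hA
  obtain ⟨z, hzC, hz⟩ := (QuotientGroup.mk'_eq_mk' C).mp hq
  refine ⟨z⁻¹, C.inv_mem hzC, ?_⟩
  rw [← hz]; group

theorem ml_main {n : ℕ} (w : MlWord n) : MlStmt.{u} w := by
  induction w with
  | var =>
    intro K _ I M hMn hJ k m hm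
    by_cases h0 : (0 : Fin 1) ∈ I
    · have hm1 : m 0 = 1 := hJ ∅ (Finset.empty_ssubset.mpr ⟨0, h0⟩) m (fun i _ => hm i)
      show (if (0 : Fin 1) ∈ I then k 0 * m 0 else m 0)
        = (if (0 : Fin 1) ∈ I then k 0 else m 0)
      simp [h0, hm1]
    · show (if (0 : Fin 1) ∈ I then k 0 * m 0 else m 0)
        = (if (0 : Fin 1) ∈ I then k 0 else m 0)
      simp [h0]
  | @comm a b u v ihu ihv =>
    intro K _ I M hMn hJ k m hm
    classical
    haveI := hMn
    set I₁ : Finset (Fin a) := Finset.univ.filter (fun i => Fin.castAdd b i ∈ I) with hI₁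
    set I₂ : Finset (Fin b) := Finset.univ.filter (fun i => Fin.natAdd a i ∈ I) with hI₂
    have memI₁ : ∀ i, i ∈ I₁ ↔ Fin.castAdd b i ∈ I := by intro i; simp [hI₁]
    have memI₂ : ∀ i, i ∈ I₂ ↔ Fin.natAdd a i ∈ I := by intro i; simp [hI₂]
    have cast_ne_nat : ∀ (i : Fin a) (j : Fin b), Fin.castAdd b i ≠ Fin.natAdd a j := by
      intro i j h
      have := congrArg Fin.val h
      simp [Fin.coe_castAdd, Fin.coe_natAdd] at this
      omega
    -- the two centralizers
    set S₂ : Set K := {g | ∃ (d : Fin b → K) (x : K),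
      (∀ i ∉ I₂, d i ∈ M) ∧ g = x * v.eval d * x⁻¹} with hS₂
    set S₁ : Set K := {g | ∃ (c : Fin a → K) (x : K),
      (∀ i ∉ I₁, c i ∈ M) ∧ g = x * u.eval c * x⁻¹} with hS₁
    have hnormal : ∀ S : Set K, (∀ g t, t ∈ S → g * t * g⁻¹ ∈ S) →
        (Subgroup.centralizer S).Normal := by
      intro S hconj
      constructor
      intro z hz g
      rw [Subgroup.mem_centralizer_iff] at hz ⊢
      intro t ht
      have h1 := hz (g⁻¹ * t * g⁻¹⁻¹) (hconj g⁻¹ t ht)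
      calc t * (g * z * g⁻¹) = g * ((g⁻¹ * t * g⁻¹⁻¹) * z) * g⁻¹ := by group
        _ = g * (z * (g⁻¹ * t * g⁻¹⁻¹)) * g⁻¹ := by rw [h1]
        _ = (g * z * g⁻¹) * t := by group
    have hS₂conj : ∀ g t, t ∈ S₂ → g * t * g⁻¹ ∈ S₂ := by
      rintro g t ⟨d, x, hd, rfl⟩
      exact ⟨d, g * x, hd, by group⟩
    have hS₁conj : ∀ g t, t ∈ S₁ → g * t * g⁻¹ ∈ S₁ := by
      rintro g t ⟨c, x, hc, rfl⟩
      exact ⟨c, g * x, hc, by group⟩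
    have hC₂n : (Subgroup.centralizer S₂).Normal := hnormal S₂ hS₂conj
    have hC₁n : (Subgroup.centralizer S₁).Normal := hnormal S₁ hS₁conj
    -- deficient u-values centralize S₂
    have hu_mem : ∀ J₁ : Finset (Fin a), J₁ ⊂ I₁ →
        ∀ c : Fin a → K, (∀ i ∉ J₁, c i ∈ M) → u.eval c ∈ Subgroup.centralizer S₂ := by
      intro J₁ hJ₁ c hc
      rw [Subgroup.mem_centralizer_iff]
      rintro t ⟨d, x, hd, rfl⟩
      obtain ⟨i₀, hi₀I₁, hi₀J₁⟩ := Finset.exists_of_ssubset hJ₁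
      have hcomm : ⁅u.eval c, v.eval (fun i => x * d i * x⁻¹)⁆ = 1 := by
        rw [← MlWord.eval_append]
        apply hJ (I.erase (Fin.castAdd b i₀))
          (Finset.erase_ssubset ((memI₁ i₀).mp hi₀I₁))
        intro i hi
        revert hi
        refine Fin.addCases (motive := fun i => i ∉ I.erase (Fin.castAdd b i₀) →
          Fin.append c (fun i => x * d i * x⁻¹) i ∈ M) ?_ ?_ i
        · intro j hj
          rw [Fin.append_left]
          by_cases hji : j = i₀
          · subst hji; exact hc j hi₀J₁
          · have : Fin.castAdd b j ∉ I := by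
              intro hIn
              exact hj (Finset.mem_erase.mpr ⟨fun h => hji (by
                have := congrArg Fin.val h
                exact Fin.ext this), hIn⟩)
            have : j ∉ I₁ := fun h => this ((memI₁ j).mp h)
            exact hc j (fun h => this (Finset.mem_of_subset hJ₁.subset h))
        · intro j hj
          rw [Fin.append_right]
          have : Fin.natAdd a j ∉ I := by
            intro hIn
            exact hj (Finset.mem_erase.mpr ⟨fun h => cast_ne_nat i₀ j h.symm, hIn⟩)
          have hjm : d j ∈ M := hd j (fun h => this ((memI₂ j).mp h))
          exact hMn.conj_mem _ hjm x
      rw [← MlWord.eval_conj v d x] at hcomm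
      exact ((commutatorElement_eq_one_iff_commute.mp hcomm).symm).eq
    -- deficient v-values centralize S₁
    have hv_mem : ∀ J₂ : Finset (Fin b), J₂ ⊂ I₂ →
        ∀ d : Fin b → K, (∀ i ∉ J₂, d i ∈ M) → v.eval d ∈ Subgroup.centralizer S₁ := by
      intro J₂ hJ₂ d hd
      rw [Subgroup.mem_centralizer_iff]
      rintro t ⟨c, x, hc, rfl⟩
      obtain ⟨j₀, hj₀I₂, hj₀J₂⟩ := Finset.exists_of_ssubset hJ₂
      have hcomm : ⁅u.eval (fun i => x * c i * x⁻¹), v.eval d⁆ = 1 := by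
        rw [← MlWord.eval_append]
        apply hJ (I.erase (Fin.natAdd a j₀))
          (Finset.erase_ssubset ((memI₂ j₀).mp hj₀I₂))
        intro i hi
        revert hi
        refine Fin.addCases (motive := fun i => i ∉ I.erase (Fin.natAdd a j₀) →
          Fin.append (fun i => x * c i * x⁻¹) d i ∈ M) ?_ ?_ i
        · intro j hj
          rw [Fin.append_left]
          have : Fin.castAdd b j ∉ I := by
            intro hIn
            exact hj (Finset.mem_erase.mpr ⟨cast_ne_nat j j₀, hIn⟩)
          have hjm : c j ∈ M := hc j (fun h => this ((memI₁ j).mp h))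
          exact hMn.conj_mem _ hjm x
        · intro j hj
          rw [Fin.append_right]
          by_cases hji : j = j₀
          · subst hji; exact hd j hj₀J₂
          · have : Fin.natAdd a j ∉ I := by
              intro hIn
              exact hj (Finset.mem_erase.mpr ⟨fun h => hji (by
                have := congrArg Fin.val h
                simp [Fin.coe_natAdd] at this
                exact Fin.ext this), hIn⟩)
            have : j ∉ I₂ := fun h => this ((memI₂ j).mp h)
            exact hd j (fun h => this (Finset.mem_of_subset hJ₂.subset h))
      rw [← MlWord.eval_conj u c x] at hcomm
      exact (commutatorElement_eq_one_iff_commute.mp hcomm).eq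
    -- apply the key lemma on both sides
    obtain ⟨z, hzC, hz⟩ := ml_key u I₁ M hMn (Subgroup.centralizer S₂) hC₂n hu_mem ihu
      (fun i => k (Fin.castAdd b i)) (fun i => m (Fin.castAdd b i))
      (fun j => hm (Fin.castAdd b j))
    obtain ⟨z', hz'C, hz'⟩ := ml_key v I₂ M hMn (Subgroup.centralizer S₁) hC₁n hv_mem ihv
      (fun i => k (Fin.natAdd a i)) (fun i => m (Fin.natAdd a i))
      (fun j => hm (Fin.natAdd a j))
    -- rewrite the goal
    simp only [MlWord.eval]
    have e1 : (fun i : Fin a => if Fin.castAdd b i ∈ I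
          then k (Fin.castAdd b i) * m (Fin.castAdd b i) else m (Fin.castAdd b i))
        = fun i : Fin a => if i ∈ I₁
          then k (Fin.castAdd b i) * m (Fin.castAdd b i) else m (Fin.castAdd b i) :=
      funext fun i => if_congr (memI₁ i).symm rfl rfl
    have e2 : (fun i : Fin a => if Fin.castAdd b i ∈ I
          then k (Fin.castAdd b i) else m (Fin.castAdd b i))
        = fun i : Fin a => if i ∈ I₁
          then k (Fin.castAdd b i) else m (Fin.castAdd b i) :=
      funext fun i => if_congr (memI₁ i).symm rfl rfl
    have e3 : (fun i : Fin b => if Fin.natAdd a i ∈ I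
          then k (Fin.natAdd a i) * m (Fin.natAdd a i) else m (Fin.natAdd a i))
        = fun i : Fin b => if i ∈ I₂
          then k (Fin.natAdd a i) * m (Fin.natAdd a i) else m (Fin.natAdd a i) :=
      funext fun i => if_congr (memI₂ i).symm rfl rfl
    have e4 : (fun i : Fin b => if Fin.natAdd a i ∈ I
          then k (Fin.natAdd a i) else m (Fin.natAdd a i))
        = fun i : Fin b => if i ∈ I₂
          then k (Fin.natAdd a i) else m (Fin.natAdd a i) :=
      funext fun i => if_congr (memI₂ i).symm rfl rfl
    rw [e1, e2, e3, e4]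
    set B' := v.eval (fun i : Fin b => if i ∈ I₂
      then k (Fin.natAdd a i) * m (Fin.natAdd a i) else m (Fin.natAdd a i)) with hB'
    set A := u.eval (fun i : Fin a => if i ∈ I₁
      then k (Fin.castAdd b i) else m (Fin.castAdd b i)) with hA
    set B := v.eval (fun i : Fin b => if i ∈ I₂
      then k (Fin.natAdd a i) else m (Fin.natAdd a i)) with hB
    have hB'S₂ : B' ∈ S₂ := by
      refine ⟨(fun i : Fin b => if i ∈ I₂
        then k (Fin.natAdd a i) * m (Fin.natAdd a i) else m (Fin.natAdd a i)), 1, ?_, ?_⟩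
      · intro i hi
        simp only [if_neg hi]
        exact hm _
      · rw [hB']; group
    have hAS₁ : A ∈ S₁ := by
      refine ⟨(fun i : Fin a => if i ∈ I₁
        then k (Fin.castAdd b i) else m (Fin.castAdd b i)), 1, ?_, ?_⟩
      · intro i hi
        simp only [if_neg hi]
        exact hm _
      · rw [hA]; group
    have step1 : ⁅A * z, B'⁆ = ⁅A, B'⁆ :=
      ml_comm_left (Subgroup.mem_centralizer_iff.mp hzC B' hB'S₂).symm A
    have step2 : ⁅A, B * z'⁆ = ⁅A, B⁆ :=
      ml_comm_right (Subgroup.mem_centralizer_iff.mp hz'C A hAS₁).symm B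
    rw [hz, step1, hz', step2]

/-- Corollary (M2): if `w_J(K; M) = 1` for every proper subset `J ⊊ I`, then
`w_I(kᵢmᵢ; m_l) = w_I(kᵢ; m_l)` for `kᵢ ∈ K`, `mⱼ ∈ M ⊴ K`. -/
theorem stmt_8 {K : Type*} [Group K] {n : ℕ} (w : MlWord n) (I : Finset (Fin n))
    (M : Subgroup K) [M.Normal]
    (hJ : ∀ J : Finset (Fin n), J ⊂ I →
      ∀ c : Fin n → K, (∀ i ∉ J, c i ∈ M) → w.eval c = 1)
    (k : Fin n → K) (m : Fin n → K) (hm : ∀ j, m j ∈ M) :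
    w.eval (fun i => if i ∈ I then k i * m i else m i) =
      w.eval (fun i => if i ∈ I then k i else m i) := by
  exact ml_main w K I M inferInstance hJ k m hm
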